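/- Let Π be the entire function defined by Π(z) = lim_{N→∞} P^{∘N}(1 + z·2^{−N}), satisfying Π(0)=1, Π'(0)=1 and P(Π(z)) = Π(2z). Then there exists a constant C > 0 such that |Π(i t)| ≤ C / t² for all real t with |t| ≥ 1. -/

import Mathlib

open Filter Topology

/-- The cubic polynomial `P(z) = (z + 2z² + z³)/4`. -/
noncomputable def P : ℂ → ℂ := fun z => (z + 2 * z ^ 2 + z ^ 3) / 4

lemma P_eq (z : ℂ) : P z = z * (1 + z) ^ 2 / 4 := by
  simp only [P]; ring

lemma norm_P (z : ℂ) : ‖P z‖ = ‖z‖ * ‖1 + z‖ ^ 2 / 4 := by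
  rw [P_eq]
  rw [norm_div, norm_mul, norm_pow]
  norm_num

lemma norm_P_le (z : ℂ) : ‖P z‖ ≤ ‖z‖ * (1 + ‖z‖) ^ 2 / 4 := by
  rw [norm_P]
  have h1 : ‖(1:ℂ) + z‖ ≤ 1 + ‖z‖ := by
    calc ‖(1:ℂ) + z‖ ≤ ‖(1:ℂ)‖ + ‖z‖ := norm_add_le _ _
    _ = 1 + ‖z‖ := by rw [norm_one]
  have h0 : (0:ℝ) ≤ ‖z‖ := norm_nonneg _
  have h0' : (0:ℝ) ≤ ‖(1:ℂ) + z‖ := norm_nonneg _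
  nlinarith [mul_le_mul_of_nonneg_left (mul_le_mul h1 h1 h0' (by linarith)) h0]

lemma iter_bound : ∀ (k : ℕ) (ε₀ : ℝ) (w : ℂ), 0 ≤ ε₀ → 3 ^ k * ε₀ ≤ 1/2 →
    ‖w‖ ≤ 1 + ε₀ → ‖P^[k] w‖ ≤ 1 + 3 ^ k * ε₀ := by
  intro k
  induction k with
  | zero => intro ε₀ w h0 _ hw; simpa using hw
  | succ k ih =>
    intro ε₀ w h0 hsm hw
    have hk3 : (3:ℝ) ^ k * ε₀ ≤ 3 ^ (k+1) * ε₀ := by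
      have : (3:ℝ)^k ≤ 3^(k+1) := by
        apply pow_le_pow_right₀ (by norm_num) (by omega)
      nlinarith
    have ih' := ih ε₀ w h0 (le_trans hk3 hsm) hw
    rw [Function.iterate_succ_apply']
    set u := P^[k] w with hu
    set ε : ℝ := 3 ^ k * ε₀ with hε
    have hε0 : 0 ≤ ε := by positivity
    have hε2 : ε ≤ 1/2 := le_trans hk3 hsm
    have hx0 : (0:ℝ) ≤ ‖u‖ := norm_nonneg _
    have h1 : ‖P u‖ ≤ ‖u‖ * (1 + ‖u‖)^2 / 4 := norm_P_le u
    have hgoal : (3:ℝ) ^ (k+1) * ε₀ = 3 * ε := by rw [hε]; ring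
    rw [hgoal]
    nlinarith [sq_nonneg (‖u‖ - 1 - ε), sq_nonneg ε]

lemma norm_one_add_I_div (t : ℝ) (N : ℕ) :
    ‖(1:ℂ) + Complex.I * t / 2 ^ N‖ ≤ 1 + t ^ 2 / (2 * 4 ^ N) := by
  have hrw : (1:ℂ) + Complex.I * t / 2 ^ N = ((1:ℝ):ℂ) + ((t / 2 ^ N : ℝ):ℂ) * Complex.I := by
    push_cast; ring
  rw [hrw, Complex.norm_add_mul_I]
  have hs : (t / 2 ^ N) ^ 2 = t ^ 2 / 4 ^ N := by
    rw [div_pow]; congr 1; rw [← pow_mul, mul_comm, pow_mul]; norm_num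
  have h4 : (0:ℝ) < 4 ^ N := by positivity
  have key : Real.sqrt (1 ^ 2 + (t / 2 ^ N) ^ 2) ≤ 1 + (t / 2 ^ N) ^ 2 / 2 := by
    rw [show (1:ℝ) + (t / 2 ^ N) ^ 2 / 2 = Real.sqrt ((1 + (t / 2 ^ N) ^ 2 / 2) ^ 2) from
      (Real.sqrt_sq (by positivity)).symm]
    apply Real.sqrt_le_sqrt
    nlinarith [sq_nonneg (t / 2 ^ N)]
  calc Real.sqrt (1 ^ 2 + (t / 2 ^ N) ^ 2) ≤ 1 + (t / 2 ^ N) ^ 2 / 2 := key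
  _ = 1 + t ^ 2 / (2 * 4 ^ N) := by rw [hs]; ring

lemma normPi_le_one (Pi : ℂ → ℂ)
    (hlim : TendstoLocallyUniformly
      (fun (N : ℕ) (z : ℂ) => P^[N] (1 + z / 2 ^ N)) Pi atTop) (t : ℝ) :
    ‖Pi (Complex.I * t)‖ ≤ 1 := by
  set z : ℂ := Complex.I * t with hz
  have hpt : Tendsto (fun N => P^[N] (1 + z / 2 ^ N)) atTop (𝓝 (Pi z)) :=
    (tendstoLocallyUniformlyOn_univ.2 hlim).tendsto_at (Set.mem_univ z)
  have h34 : Tendsto (fun N : ℕ => ((3:ℝ)/4) ^ N * t ^ 2) atTop (𝓝 0) := by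
    have := (tendsto_pow_atTop_nhds_zero_of_lt_one (by norm_num : (0:ℝ) ≤ 3/4)
      (by norm_num : (3:ℝ)/4 < 1)).mul_const (t ^ 2)
    simpa using this
  have hev : ∀ᶠ N in atTop, ‖P^[N] (1 + z / 2 ^ N)‖ ≤ 1 + ((3:ℝ)/4) ^ N * t ^ 2 := by
    have hsm : ∀ᶠ N in atTop, ((3:ℝ)/4) ^ N * t ^ 2 ≤ 1/2 :=
      h34.eventually (eventually_le_nhds (by norm_num))
    filter_upwards [hsm] with N hN
    have hε0 : (0:ℝ) ≤ t ^ 2 / (2 * 4 ^ N) := by positivity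
    have hpow : (3:ℝ) ^ N * (t ^ 2 / (2 * 4 ^ N)) = ((3:ℝ)/4) ^ N * t ^ 2 / 2 := by
      rw [div_pow]; ring
    have hsm' : (3:ℝ) ^ N * (t ^ 2 / (2 * 4 ^ N)) ≤ 1/2 := by
      rw [hpow]; linarith
    have hw : ‖(1:ℂ) + z / 2 ^ N‖ ≤ 1 + t ^ 2 / (2 * 4 ^ N) := by
      rw [hz]; exact_mod_cast norm_one_add_I_div t N
    have := iter_bound N (t ^ 2 / (2 * 4 ^ N)) (1 + z / 2 ^ N) hε0 hsm' hw
    calc ‖P^[N] (1 + z / 2 ^ N)‖ ≤ 1 + (3:ℝ) ^ N * (t ^ 2 / (2 * 4 ^ N)) := this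
    _ = 1 + ((3:ℝ)/4) ^ N * t ^ 2 / 2 := by rw [hpow]
    _ ≤ 1 + ((3:ℝ)/4) ^ N * t ^ 2 := by
        have : (0:ℝ) ≤ ((3:ℝ)/4) ^ N * t ^ 2 := by positivity
        linarith
  have hlim1 : Tendsto (fun N : ℕ => 1 + ((3:ℝ)/4) ^ N * t ^ 2) atTop (𝓝 1) := by
    have := h34.const_add (1:ℝ)
    simpa using this
  exact le_of_tendsto_of_tendsto hpt.norm hlim1 hev

lemma fe_real (Pi : ℂ → ℂ) (hfe : ∀ z : ℂ, P (Pi z) = Pi (2 * z)) (s : ℝ) :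
    Pi (Complex.I * ((2 * s : ℝ) : ℂ)) = P (Pi (Complex.I * s)) := by
  rw [hfe (Complex.I * s)]
  congr 1
  push_cast; ring

lemma w_eq_one {w : ℂ} (hw : ‖w‖ ≤ 1) (heq : ‖w‖ * ‖1 + w‖ ^ 2 / 4 = 1) : w = 1 := by
  have hc : ‖(1:ℂ) + w‖ ≤ 2 := by
    calc ‖(1:ℂ) + w‖ ≤ ‖(1:ℂ)‖ + ‖w‖ := norm_add_le _ _
    _ ≤ 2 := by rw [norm_one]; linarith
  have h0 : (0:ℝ) ≤ ‖w‖ := norm_nonneg _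
  have h0' : (0:ℝ) ≤ ‖(1:ℂ) + w‖ := norm_nonneg _
  have hc4 : ‖(1:ℂ) + w‖ ^ 2 ≤ 4 := by nlinarith
  have ha : ‖w‖ = 1 := by nlinarith [mul_le_mul_of_nonneg_left hc4 h0]
  have hc2 : ‖(1:ℂ) + w‖ ^ 2 = 4 := by nlinarith
  have hn1 : Complex.normSq w = 1 := by
    rw [← Complex.sq_norm, ha]; norm_num
  have hn2 : Complex.normSq (1 + w) = 4 := by
    rw [← Complex.sq_norm, hc2]
  rw [Complex.normSq_apply] at hn1
  rw [Complex.normSq_apply] at hn2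
  simp only [Complex.add_re, Complex.add_im, Complex.one_re, Complex.one_im, zero_add] at hn2
  have hre : w.re = 1 := by nlinarith
  have him : w.im = 0 := by nlinarith
  apply Complex.ext <;> simp [hre, him]

lemma f_lt_one (Pi : ℂ → ℂ)
    (hlim : TendstoLocallyUniformly
      (fun (N : ℕ) (z : ℂ) => P^[N] (1 + z / 2 ^ N)) Pi atTop)
    (hdiff : Differentiable ℂ Pi) (h1 : deriv Pi 0 = 1)
    (hfe : ∀ z : ℂ, P (Pi z) = Pi (2 * z)) :
    ∀ t : ℝ, t ≠ 0 → ‖Pi (Complex.I * t)‖ < 1 := by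
  intro t₀ ht₀
  by_contra hcon
  push_neg at hcon
  have hone : ‖Pi (Complex.I * t₀)‖ = 1 :=
    le_antisymm (normPi_le_one Pi hlim t₀) hcon
  -- rigidity: if ‖Pi(i·2s)‖ = 1 then Pi(i·s) = 1
  have rigid : ∀ s : ℝ, ‖Pi (Complex.I * ((2*s : ℝ):ℂ))‖ = 1 → Pi (Complex.I * s) = 1 := by
    intro s hs
    rw [fe_real Pi hfe s, norm_P] at hs
    exact w_eq_one (normPi_le_one Pi hlim s) hs
  -- induction: ‖Pi (i t₀/2^k)‖ = 1 for all k
  have A : ∀ k : ℕ, ‖Pi (Complex.I * ((t₀ / 2 ^ k : ℝ):ℂ))‖ = 1 := by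
    intro k
    induction k with
    | zero => simpa using hone
    | succ k ih =>
      have h2 : (2 : ℝ) * (t₀ / 2 ^ (k+1)) = t₀ / 2 ^ k := by
        field_simp; ring
      have := rigid (t₀ / 2 ^ (k+1)) (by rw [h2]; exact ih)
      rw [this]; simp
  have B : ∀ k : ℕ, Pi (Complex.I * ((t₀ / 2 ^ (k+1) : ℝ):ℂ)) = 1 := by
    intro k
    have h2 : (2 : ℝ) * (t₀ / 2 ^ (k+1)) = t₀ / 2 ^ k := by field_simp; ring
    exact rigid _ (by rw [h2]; exact A k)
  -- the zeros accumulate at 0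
  set g : ℂ → ℂ := fun z => Pi z - 1 with hg
  have hga : AnalyticAt ℂ g 0 := (hdiff.analyticAt 0).sub analyticAt_const
  have hzt : Tendsto (fun k : ℕ => Complex.I * ((t₀ / 2 ^ (k+1) : ℝ):ℂ)) atTop
      (𝓝[≠] (0:ℂ)) := by
    rw [tendsto_nhdsWithin_iff]
    constructor
    · have hr : Tendsto (fun k : ℕ => (t₀ / 2 ^ (k+1) : ℝ)) atTop (𝓝 0) := by
        have h12 : Tendsto (fun k : ℕ => t₀ * ((1:ℝ)/2) ^ (k+1)) atTop (𝓝 0) := by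
          have := ((tendsto_pow_atTop_nhds_zero_of_lt_one
            (by norm_num : (0:ℝ) ≤ 1/2) (by norm_num : (1:ℝ)/2 < 1)).comp
            (tendsto_add_atTop_nat 1)).const_mul t₀
          simpa using this
        convert h12 using 2 with k
        rw [div_pow]; ring
      have := ((Complex.continuous_ofReal.tendsto 0).comp hr).const_mul Complex.I
      simpa using this
    · apply Filter.Eventually.of_forall
      intro k
      simp only [Set.mem_compl_iff, Set.mem_singleton_iff]
      intro hzero
      rcases mul_eq_zero.1 hzero with h | h
      · exact Complex.I_ne_zero h
      · have : (t₀ / 2 ^ (k+1) : ℝ) = 0 := by exact_mod_cast h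
        have h2 : (2:ℝ) ^ (k+1) ≠ 0 := by positivity
        exact ht₀ (by field_simp at this; simpa using this)
  have hfreq : ∃ᶠ z in 𝓝[≠] (0:ℂ), g z = 0 := by
    apply hzt.frequently
    apply Filter.Frequently.of_forall
    intro k
    simp only [hg, B k, sub_self]
  rcases hga.eventually_eq_zero_or_eventually_ne_zero with hev | hne
  · have heq : Pi =ᶠ[𝓝 (0:ℂ)] fun _ => (1:ℂ) := by
      filter_upwards [hev] with z hz
      simpa [hg, sub_eq_zero] using hz
    have : deriv Pi 0 = 0 := by
      rw [heq.deriv_eq]; simp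
    rw [this] at h1; exact zero_ne_one h1
  · rcases (hfreq.and_eventually hne).exists with ⟨z, hz1, hz2⟩
    exact hz2 hz1

/-- for the entire Poincaré function `Π = lim P^{∘N}(1 + z·2^{-N})`
(with `Π(0) = 1`, `Π'(0) = 1`, `P(Π(z)) = Π(2z)`), there is `C > 0` with
`|Π(it)| ≤ C/t²` for all real `t` with `|t| ≥ 1`. -/
theorem stmt17 (Pi : ℂ → ℂ)
    (hlim : TendstoLocallyUniformly
      (fun (N : ℕ) (z : ℂ) => P^[N] (1 + z / 2 ^ N)) Pi atTop)
    (hdiff : Differentiable ℂ Pi)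
    (h0 : Pi 0 = 1) (h1 : deriv Pi 0 = 1)
    (hfe : ∀ z : ℂ, P (Pi z) = Pi (2 * z)) :
    ∃ C : ℝ, 0 < C ∧ ∀ t : ℝ, 1 ≤ |t| → ‖Pi (Complex.I * t)‖ ≤ C / t ^ 2 := by
  set f : ℝ → ℝ := fun t => ‖Pi (Complex.I * t)‖ with hf
  have hfc : Continuous f :=
    (hdiff.continuous.comp (continuous_const.mul Complex.continuous_ofReal)).norm
  have hf0 : ∀ t, 0 ≤ f t := fun t => norm_nonneg _
  have hstep : ∀ s : ℝ, f (2 * s) ≤ f s * (1 + f s) ^ 2 / 4 := by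
    intro s
    have : f (2 * s) = ‖P (Pi (Complex.I * s))‖ := by
      rw [hf]; simp only [← fe_real Pi hfe s]
    rw [this]
    exact norm_P_le _
  -- the compact fundamental domain
  set K : Set ℝ := Set.Icc (-2) (-1) ∪ Set.Icc 1 2 with hK
  have hKc : IsCompact K := (isCompact_Icc).union isCompact_Icc
  have hKne : K.Nonempty := ⟨1, Or.inr ⟨le_refl 1, by norm_num⟩⟩
  obtain ⟨t₁, ht₁K, hmax⟩ := hKc.exists_isMaxOn hKne hfc.continuousOn
  set δ : ℝ := f t₁ with hδ
  have ht₁ne : t₁ ≠ 0 := by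
    rcases ht₁K with h | h
    · intro hc; rw [hc] at h; have := h.2; norm_num at this
    · intro hc; rw [hc] at h; have := h.1; norm_num at this
  have hδ1 : δ < 1 := f_lt_one Pi hlim hdiff h1 hfe t₁ ht₁ne
  have hδ0 : 0 ≤ δ := hf0 t₁
  set r : ℝ := (1 + δ) ^ 2 / 4 with hr
  have hr0 : 0 ≤ r := by positivity
  have hr1 : r < 1 := by rw [hr]; nlinarith
  -- main induction
  have hind : ∀ n : ℕ, ∀ s : ℝ, s ∈ K →
      f (2 ^ n * s) ≤ δ * r ^ n ∧
      f (2 ^ n * s) ≤ δ * Real.exp (2 * δ * ∑ j ∈ Finset.range n, r ^ j) / 4 ^ n := by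
    intro n
    induction n with
    | zero =>
      intro s hs
      constructor
      · simpa using hmax hs
      · simpa using hmax hs
    | succ n ih =>
      intro s hs
      obtain ⟨ih1, ih2⟩ := ih s hs
      set x : ℝ := f (2 ^ n * s) with hx
      have hx0 : 0 ≤ x := hf0 _
      have harg : (2:ℝ) ^ (n+1) * s = 2 * (2 ^ n * s) := by ring
      have hmain : f (2 ^ (n+1) * s) ≤ x * (1 + x) ^ 2 / 4 := by
        rw [harg]; exact hstep _
      have hrn0 : 0 ≤ r ^ n := by positivity
      have hrn1 : r ^ n ≤ 1 := pow_le_one₀ hr0 (le_of_lt hr1)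
      have hxδ : x ≤ δ := le_trans ih1 (by nlinarith)
      constructor
      · calc f (2 ^ (n+1) * s) ≤ x * (1 + x) ^ 2 / 4 := hmain
        _ ≤ (δ * r ^ n) * (1 + δ) ^ 2 / 4 := by
            have hy0 : (0:ℝ) ≤ δ * r ^ n := by positivity
            have hA : x * (1 + x) ^ 2 ≤ (δ * r ^ n) * (1 + x) ^ 2 :=
              mul_le_mul_of_nonneg_right ih1 (by positivity)
            have hB : (1 + x) ^ 2 ≤ (1 + δ) ^ 2 := by nlinarith
            have hC : (δ * r ^ n) * (1 + x) ^ 2 ≤ (δ * r ^ n) * (1 + δ) ^ 2 :=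
              mul_le_mul_of_nonneg_left hB hy0
            linarith
        _ = δ * r ^ (n+1) := by rw [hr]; ring
      · have hexp : (1 + x) ^ 2 ≤ Real.exp (2 * δ * r ^ n) := by
          have h1x : 1 + x ≤ Real.exp (δ * r ^ n) := by
            have := Real.add_one_le_exp (δ * r ^ n)
            nlinarith
          calc (1 + x) ^ 2 ≤ Real.exp (δ * r ^ n) ^ 2 := by
                apply pow_le_pow_left₀ (by linarith) h1x
          _ = Real.exp (2 * δ * r ^ n) := by
                rw [← Real.exp_nat_mul]; norm_num; ring_nf
        have hE0 : 0 < Real.exp (2 * δ * ∑ j ∈ Finset.range n, r ^ j) := Real.exp_pos _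
        have h4n : (0:ℝ) < 4 ^ n := by positivity
        calc f (2 ^ (n+1) * s) ≤ x * (1 + x) ^ 2 / 4 := hmain
        _ ≤ (δ * Real.exp (2 * δ * ∑ j ∈ Finset.range n, r ^ j) / 4 ^ n)
              * Real.exp (2 * δ * r ^ n) / 4 := by
            have hmul : x * (1 + x) ^ 2 ≤
                (δ * Real.exp (2 * δ * ∑ j ∈ Finset.range n, r ^ j) / 4 ^ n)
                * Real.exp (2 * δ * r ^ n) := by
              apply mul_le_mul ih2 hexp (by positivity) (by positivity)
            linarith
        _ = δ * Real.exp (2 * δ * ∑ j ∈ Finset.range (n+1), r ^ j) / 4 ^ (n+1) := by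
            rw [Finset.sum_range_succ, mul_add, Real.exp_add, pow_succ]
            ring
  -- geometric sum bound
  have hsum : ∀ n : ℕ, ∑ j ∈ Finset.range n, r ^ j ≤ 1 / (1 - r) := by
    intro n
    induction n with
    | zero =>
      have h1r : (0:ℝ) < 1 - r := by linarith
      have : (0:ℝ) ≤ 1 / (1 - r) := by positivity
      simpa using this
    | succ n ih =>
      rw [geom_sum_succ]
      have h1r : 0 < 1 - r := by linarith
      have : r * ∑ j ∈ Finset.range n, r ^ j ≤ r * (1 / (1 - r)) :=
        mul_le_mul_of_nonneg_left ih hr0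
      have heq : r * (1 / (1 - r)) + 1 = 1 / (1 - r) := by field_simp; ring
      linarith
  set C₀ : ℝ := δ * Real.exp (2 * δ / (1 - r)) with hC₀
  have hC₀0 : 0 ≤ C₀ := by positivity
  have hbound : ∀ n : ℕ, ∀ s : ℝ, s ∈ K → f (2 ^ n * s) ≤ C₀ / 4 ^ n := by
    intro n s hs
    have h2 := (hind n s hs).2
    have hmono : Real.exp (2 * δ * ∑ j ∈ Finset.range n, r ^ j) ≤
        Real.exp (2 * δ / (1 - r)) := by
      apply Real.exp_le_exp.2
      have := hsum n
      calc 2 * δ * ∑ j ∈ Finset.range n, r ^ j ≤ 2 * δ * (1 / (1 - r)) := by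
            apply mul_le_mul_of_nonneg_left this (by linarith)
      _ = 2 * δ / (1 - r) := by ring
    have h4n : (0:ℝ) < 4 ^ n := by positivity
    calc f (2 ^ n * s) ≤ δ * Real.exp (2 * δ * ∑ j ∈ Finset.range n, r ^ j) / 4 ^ n := h2
    _ ≤ C₀ / 4 ^ n := by
        have hnum : δ * Real.exp (2 * δ * ∑ j ∈ Finset.range n, r ^ j) ≤ C₀ :=
          mul_le_mul_of_nonneg_left hmono hδ0
        exact div_le_div_of_nonneg_right hnum h4n.le
  refine ⟨4 * C₀ + 1, by linarith, ?_⟩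
  intro t ht
  obtain ⟨n, hn1, hn2⟩ := exists_nat_pow_near ht one_lt_two
  set s : ℝ := t / 2 ^ n with hs
  have h2n : (0:ℝ) < 2 ^ n := by positivity
  have hsabs : |s| = |t| / 2 ^ n := by
    rw [hs, abs_div, abs_of_pos h2n]
  have hs1 : 1 ≤ |s| := by rw [hsabs, le_div_iff₀ h2n]; linarith
  have hs2 : |s| ≤ 2 := by
    rw [hsabs, div_le_iff₀ h2n]
    have h21 : (2:ℝ) ^ (n+1) = 2 ^ n * 2 := by ring
    nlinarith [hn2]
  have hsK : s ∈ K := by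
    rcases le_or_gt 0 s with h | h
    · right
      constructor
      · rw [abs_of_nonneg h] at hs1; exact hs1
      · rw [abs_of_nonneg h] at hs2; exact hs2
    · left
      constructor
      · rw [abs_of_neg h] at hs2; linarith
      · rw [abs_of_neg h] at hs1; linarith
  have hts : t = 2 ^ n * s := by rw [hs]; field_simp
  have hft : f t ≤ C₀ / 4 ^ n := by rw [hts]; exact hbound n s hsK
  have h4n : (0:ℝ) < 4 ^ n := by positivity
  have htne : t ≠ 0 := by
    intro h; rw [h] at ht; simp at ht; linarith
  have ht2 : (0:ℝ) < t ^ 2 := by positivity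
  have h44 : ((2:ℝ) ^ (n+1)) ^ 2 = 4 * 4 ^ n := by
    rw [← pow_mul, mul_comm, pow_mul]
    norm_num [pow_succ]
    ring
  have htb : t ^ 2 ≤ 4 * 4 ^ n := by
    nlinarith [hn2, abs_nonneg t, sq_abs t]
  have hfin : C₀ / 4 ^ n ≤ (4 * C₀ + 1) / t ^ 2 := by
    rw [div_le_div_iff₀ h4n ht2]
    nlinarith [mul_le_mul_of_nonneg_left htb hC₀0, h4n]
  exact le_trans hft hfin
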